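/- Define d_k = (k-2)²(k+2)/(4k²), a_k = (d_k - d_{k+2})², and ε_k = -2 d_{k+2}² + d_k d_{k+2} + d_{k+2} d_{k+4}. Then for every integer k ≥ 1, a_k a_{k+2} - ε_k² > 0; in particular a_k a_{k+2} > 1/100. -/
import Mathlib

noncomputable def d (k : ℕ) : ℝ := ((k : ℝ) - 2) ^ 2 * ((k : ℝ) + 2) / (4 * (k : ℝ) ^ 2)

noncomputable def a (k : ℕ) : ℝ := (d k - d (k + 2)) ^ 2

noncomputable def eps (k : ℕ) : ℝ :=
  -2 * d (k + 2) ^ 2 + d k * d (k + 2) + d (k + 2) * d (k + 4)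

private lemma keyP (x : ℝ) (hx : (6:ℝ) ≤ x) :
    0 < (2415919104 : ℝ) + (12884901888 : ℝ) * x ^ 1 + (25635586048 : ℝ) * x ^ 2 + (20132659200 : ℝ) * x ^ 3 - (5150605312 : ℝ) * x ^ 4 - (22951231488 : ℝ) * x ^ 5 - (18102616064 : ℝ) * x ^ 6 - (4580179968 : ℝ) * x ^ 7 + (2556428288 : ℝ) * x ^ 8 + (2961178624 : ℝ) * x ^ 9 + (1486356480 : ℝ) * x ^ 10 + (487587840 : ℝ) * x ^ 11 + (112197632 : ℝ) * x ^ 12 + (18087936 : ℝ) * x ^ 13 + (1966080 : ℝ) * x ^ 14 + (131072 : ℝ) * x ^ 15 + (4096 : ℝ) * x ^ 16 := by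
  have ht : (0:ℝ) ≤ x - 6 := by linarith
  have hp1 : (0:ℝ) ≤ (2066792104008351744 : ℝ) * (x - 6) ^ 1 := mul_nonneg (by norm_num) (pow_nonneg ht 1)
  have hp2 : (0:ℝ) ≤ (1981962709469495296 : ℝ) * (x - 6) ^ 2 := mul_nonneg (by norm_num) (pow_nonneg ht 2)
  have hp3 : (0:ℝ) ≤ (1178449214095491072 : ℝ) * (x - 6) ^ 3 := mul_nonneg (by norm_num) (pow_nonneg ht 3)
  have hp4 : (0:ℝ) ≤ (486446432258097152 : ℝ) * (x - 6) ^ 4 := mul_nonneg (by norm_num) (pow_nonneg ht 4)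
  have hp5 : (0:ℝ) ≤ (147865955500818432 : ℝ) * (x - 6) ^ 5 := mul_nonneg (by norm_num) (pow_nonneg ht 5)
  have hp6 : (0:ℝ) ≤ (34249192486469632 : ℝ) * (x - 6) ^ 6 := mul_nonneg (by norm_num) (pow_nonneg ht 6)
  have hp7 : (0:ℝ) ≤ (6167928797921280 : ℝ) * (x - 6) ^ 7 := mul_nonneg (by norm_num) (pow_nonneg ht 7)
  have hp8 : (0:ℝ) ≤ (873060720705536 : ℝ) * (x - 6) ^ 8 := mul_nonneg (by norm_num) (pow_nonneg ht 8)
  have hp9 : (0:ℝ) ≤ (97481616523264 : ℝ) * (x - 6) ^ 9 := mul_nonneg (by norm_num) (pow_nonneg ht 9)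
  have hp10 : (0:ℝ) ≤ (8559294676992 : ℝ) * (x - 6) ^ 10 := mul_nonneg (by norm_num) (pow_nonneg ht 10)
  have hp11 : (0:ℝ) ≤ (584932392960 : ℝ) * (x - 6) ^ 11 := mul_nonneg (by norm_num) (pow_nonneg ht 11)
  have hp12 : (0:ℝ) ≤ (30507008000 : ℝ) * (x - 6) ^ 12 := mul_nonneg (by norm_num) (pow_nonneg ht 12)
  have hp13 : (0:ℝ) ≤ (1174142976 : ℝ) * (x - 6) ^ 13 := mul_nonneg (by norm_num) (pow_nonneg ht 13)
  have hp14 : (0:ℝ) ≤ (31457280 : ℝ) * (x - 6) ^ 14 := mul_nonneg (by norm_num) (pow_nonneg ht 14)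
  have hp15 : (0:ℝ) ≤ (524288 : ℝ) * (x - 6) ^ 15 := mul_nonneg (by norm_num) (pow_nonneg ht 15)
  have hp16 : (0:ℝ) ≤ (4096 : ℝ) * (x - 6) ^ 16 := mul_nonneg (by norm_num) (pow_nonneg ht 16)
  have hexp : (2415919104 : ℝ) + (12884901888 : ℝ) * x ^ 1 + (25635586048 : ℝ) * x ^ 2 + (20132659200 : ℝ) * x ^ 3 - (5150605312 : ℝ) * x ^ 4 - (22951231488 : ℝ) * x ^ 5 - (18102616064 : ℝ) * x ^ 6 - (4580179968 : ℝ) * x ^ 7 + (2556428288 : ℝ) * x ^ 8 + (2961178624 : ℝ) * x ^ 9 + (1486356480 : ℝ) * x ^ 10 + (487587840 : ℝ) * x ^ 11 + (112197632 : ℝ) * x ^ 12 + (18087936 : ℝ) * x ^ 13 + (1966080 : ℝ) * x ^ 14 + (131072 : ℝ) * x ^ 15 + (4096 : ℝ) * x ^ 16 = (1006323244808011776 : ℝ) + (2066792104008351744 : ℝ) * (x - 6) ^ 1 + (1981962709469495296 : ℝ) * (x - 6) ^ 2 + (1178449214095491072 : ℝ) * (x - 6) ^ 3 + (486446432258097152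 : ℝ) * (x - 6) ^ 4 + (147865955500818432 : ℝ) * (x - 6) ^ 5 + (34249192486469632 : ℝ) * (x - 6) ^ 6 + (6167928797921280 : ℝ) * (x - 6) ^ 7 + (873060720705536 : ℝ) * (x - 6) ^ 8 + (97481616523264 : ℝ) * (x - 6) ^ 9 + (8559294676992 : ℝ) * (x - 6) ^ 10 + (584932392960 : ℝ) * (x - 6) ^ 11 + (30507008000 : ℝ) * (x - 6) ^ 12 + (1174142976 : ℝ) * (x - 6) ^ 13 + (31457280 : ℝ) * (x - 6) ^ 14 + (524288 : ℝ) * (x - 6) ^ 15 + (4096 : ℝ) * (x - 6) ^ 16 := by ring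
  rw [hexp]
  linarith [hp1, hp2, hp3, hp4, hp5, hp6, hp7, hp8, hp9, hp10, hp11, hp12, hp13, hp14, hp15, hp16]

private lemma keyQ (x : ℝ) (hx : (3:ℝ) ≤ x) :
    0 < 100 * ((2415919104 : ℝ) + (12884901888 : ℝ) * x ^ 1 + (25635586048 : ℝ) * x ^ 2 + (20132659200 : ℝ) * x ^ 3 - (4076863488 : ℝ) * x ^ 4 - (20266876928 : ℝ) * x ^ 5 - (15888023552 : ℝ) * x ^ 6 - (4043309056 : ℝ) * x ^ 7 + (2422210560 : ℝ) * x ^ 8 + (2885681152 : ℝ) * x ^ 9 + (1482162176 : ℝ) * x ^ 10 + (489684992 : ℝ) * x ^ 11 + (112459776 : ℝ) * x ^ 12 + (18087936 : ℝ) * x ^ 13 + (1966080 : ℝ) * x ^ 14 + (131072 : ℝ) * x ^ 15 + (4096 : ℝ) * x ^ 16) - (256 * x ^ 2 * (x + 2) ^ 4 * (x + 4) ^ 2) ^ 2 := by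
  have ht : (0:ℝ) ≤ x - 3 := by linarith
  have hq1 : (0:ℝ) ≤ (101460682034380800 : ℝ) * (x - 3) ^ 1 := mul_nonneg (by norm_num) (pow_nonneg ht 1)
  have hq2 : (0:ℝ) ≤ (172180364915507200 : ℝ) * (x - 3) ^ 2 := mul_nonneg (by norm_num) (pow_nonneg ht 2)
  have hq3 : (0:ℝ) ≤ (177432240291840000 : ℝ) * (x - 3) ^ 3 := mul_nonneg (by norm_num) (pow_nonneg ht 3)
  have hq4 : (0:ℝ) ≤ (124746869812428800 : ℝ) * (x - 3) ^ 4 := mul_nonneg (by norm_num) (pow_nonneg ht 4)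
  have hq5 : (0:ℝ) ≤ (63660529791795200 : ℝ) * (x - 3) ^ 5 := mul_nonneg (by norm_num) (pow_nonneg ht 5)
  have hq6 : (0:ℝ) ≤ (24462431947980800 : ℝ) * (x - 3) ^ 6 := mul_nonneg (by norm_num) (pow_nonneg ht 6)
  have hq7 : (0:ℝ) ≤ (7237968885186560 : ℝ) * (x - 3) ^ 7 := mul_nonneg (by norm_num) (pow_nonneg ht 7)
  have hq8 : (0:ℝ) ≤ (1670069251702784 : ℝ) * (x - 3) ^ 8 := mul_nonneg (by norm_num) (pow_nonneg ht 8)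
  have hq9 : (0:ℝ) ≤ (302065483776000 : ℝ) * (x - 3) ^ 9 := mul_nonneg (by norm_num) (pow_nonneg ht 9)
  have hq10 : (0:ℝ) ≤ (42754303983616 : ℝ) * (x - 3) ^ 10 := mul_nonneg (by norm_num) (pow_nonneg ht 10)
  have hq11 : (0:ℝ) ≤ (4692583383040 : ℝ) * (x - 3) ^ 11 := mul_nonneg (by norm_num) (pow_nonneg ht 11)
  have hq12 : (0:ℝ) ≤ (392048082944 : ℝ) * (x - 3) ^ 12 := mul_nonneg (by norm_num) (pow_nonneg ht 12)
  have hq13 : (0:ℝ) ≤ (24131665920 : ℝ) * (x - 3) ^ 13 := mul_nonneg (by norm_num) (pow_nonneg ht 13)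
  have hq14 : (0:ℝ) ≤ (1033240576 : ℝ) * (x - 3) ^ 14 := mul_nonneg (by norm_num) (pow_nonneg ht 14)
  have hq15 : (0:ℝ) ≤ (27525120 : ℝ) * (x - 3) ^ 15 := mul_nonneg (by norm_num) (pow_nonneg ht 15)
  have hq16 : (0:ℝ) ≤ (344064 : ℝ) * (x - 3) ^ 16 := mul_nonneg (by norm_num) (pow_nonneg ht 16)
  have hexp : 100 * ((2415919104 : ℝ) + (12884901888 : ℝ) * x ^ 1 + (25635586048 : ℝ) * x ^ 2 + (20132659200 : ℝ) * x ^ 3 - (4076863488 : ℝ) * x ^ 4 - (20266876928 : ℝ) * x ^ 5 - (15888023552 : ℝ) * x ^ 6 - (4043309056 : ℝ) * x ^ 7 + (2422210560 : ℝ) * x ^ 8 + (2885681152 : ℝ) * x ^ 9 + (1482162176 : ℝ) * x ^ 10 + (489684992 : ℝ) * x ^ 11 + (112459776 : ℝ) * x ^ 12 + (18087936 : ℝ) * x ^ 13 + (1966080 : ℝ) * x ^ 14 + (131072 : ℝ) * x ^ 15 + (4096 : ℝ) * x ^ 16) - (256 * x ^ 2 * (x + 2) ^ 4 * (x + 4)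 ^ 2) ^ 2 = (27236998799769600 : ℝ) + (101460682034380800 : ℝ) * (x - 3) ^ 1 + (172180364915507200 : ℝ) * (x - 3) ^ 2 + (177432240291840000 : ℝ) * (x - 3) ^ 3 + (124746869812428800 : ℝ) * (x - 3) ^ 4 + (63660529791795200 : ℝ) * (x - 3) ^ 5 + (24462431947980800 : ℝ) * (x - 3) ^ 6 + (7237968885186560 : ℝ) * (x - 3) ^ 7 + (1670069251702784 : ℝ) * (x - 3) ^ 8 + (302065483776000 : ℝ) * (x - 3) ^ 9 + (42754303983616 : ℝ) * (x - 3) ^ 10 + (4692583383040 : ℝ) * (x - 3) ^ 11 + (392048082944 : ℝ) * (x - 3) ^ 12 + (24131665920 : ℝ) * (x - 3) ^ 13 + (1033240576 : ℝ) * (x - 3) ^ 14 + (27525120 : ℝ) * (x - 3) ^ 15 + (344064 : ℝ) * (x - 3) ^ 16 := by ring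
  rw [hexp]
  linarith [hq1, hq2, hq3, hq4, hq5, hq6, hq7, hq8, hq9, hq10, hq11, hq12, hq13, hq14, hq15, hq16]

theorem det_pos (k : ℕ) (hk : 1 ≤ k) :
    0 < a k * a (k + 2) - eps k ^ 2 ∧ 1 / 100 < a k * a (k + 2) := by
  by_cases h6 : k ≤ 5
  · interval_cases k <;> constructor <;> norm_num [a, eps, d]
  · push_neg at h6
    have hx6 : (6:ℝ) ≤ (k : ℝ) := by exact_mod_cast h6
    have hk1 : (0:ℝ) < (k : ℝ) := by linarith
    have hk2 : (0:ℝ) < (k : ℝ) + 2 := by linarith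
    have hk4 : (0:ℝ) < (k : ℝ) + 4 := by linarith
    have h0 : ((k : ℝ)) ≠ 0 := ne_of_gt hk1
    have h2 : ((k : ℝ)) + 2 ≠ 0 := ne_of_gt hk2
    have h4 : ((k : ℝ)) + 4 ≠ 0 := ne_of_gt hk4
    have hD0 : (0:ℝ) < 256 * ((k : ℝ)) ^ 2 * (((k : ℝ)) + 2) ^ 4 * (((k : ℝ)) + 4) ^ 2 :=
      mul_pos (mul_pos (mul_pos (by norm_num) (pow_pos hk1 2)) (pow_pos hk2 4)) (pow_pos hk4 2)
    have hD : (0:ℝ) < (256 * ((k : ℝ)) ^ 2 * (((k : ℝ)) + 2) ^ 4 * (((k : ℝ)) + 4) ^ 2) ^ 2 := pow_pos hD0 2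
    have key : a k * a (k + 2) - eps k ^ 2 = ((2415919104 : ℝ) + (12884901888 : ℝ) * ((k : ℝ)) ^ 1 + (25635586048 : ℝ) * ((k : ℝ)) ^ 2 + (20132659200 : ℝ) * ((k : ℝ)) ^ 3 - (5150605312 : ℝ) * ((k : ℝ)) ^ 4 - (22951231488 : ℝ) * ((k : ℝ)) ^ 5 - (18102616064 : ℝ) * ((k : ℝ)) ^ 6 - (4580179968 : ℝ) * ((k : ℝ)) ^ 7 + (2556428288 : ℝ) * ((k : ℝ)) ^ 8 + (2961178624 : ℝ) * ((k : ℝ)) ^ 9 + (1486356480 : ℝ) * ((k : ℝ)) ^ 10 + (487587840 : ℝ) * ((k : ℝ)) ^ 11 + (112197632 : ℝ) * ((k : ℝ)) ^ 12 + (18087936 : ℝ) * ((k : ℝ)) ^ 13 + (1966080 : ℝ) * ((k : ℝ)) ^ 14 + (131072 : ℝ) * ((k : ℝ)) ^ 15 + (4096 : ℝ) * ((k : ℝ)) ^ 16) / (256 * ((k : ℝ)) ^ 2 * (((k : ℝ)) + 2) ^ 4 * (((k : ℝ)) + 4) ^ 2) ^ 2 := by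
      simp only [a, eps, d]
      push_cast
      field_simp
      ring
    have key2 : a k * a (k + 2) = ((2415919104 : ℝ) + (12884901888 : ℝ) * ((k : ℝ)) ^ 1 + (25635586048 : ℝ) * ((k : ℝ)) ^ 2 + (20132659200 : ℝ) * ((k : ℝ)) ^ 3 - (4076863488 : ℝ) * ((k : ℝ)) ^ 4 - (20266876928 : ℝ) * ((k : ℝ)) ^ 5 - (15888023552 : ℝ) * ((k : ℝ)) ^ 6 - (4043309056 : ℝ) * ((k : ℝ)) ^ 7 + (2422210560 : ℝ) * ((k : ℝ)) ^ 8 + (2885681152 : ℝ) * ((k : ℝ)) ^ 9 + (1482162176 : ℝ) * ((k : ℝ)) ^ 10 + (489684992 : ℝ) * ((k : ℝ)) ^ 11 + (112459776 : ℝ) * ((k : ℝ)) ^ 12 + (18087936 : ℝ) * ((k : ℝ)) ^ 13 + (1966080 : ℝ) * ((k : ℝ)) ^ 14 + (131072 : ℝ) * ((k : ℝ)) ^ 15 + (4096 : ℝ) * ((k : ℝ)) ^ 16) / (256 * ((k : ℝ)) ^ 2 * (((k : ℝ)) + 2) ^ 4 * (((k : ℝ)) + 4) ^ 2) ^ 2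 := by
      simp only [a, d]
      push_cast
      field_simp
      ring
    constructor
    · rw [key]
      exact div_pos (keyP _ hx6) hD
    · rw [key2, lt_div_iff₀ hD]
      have hq := keyQ ((k : ℝ)) (by linarith)
      linarith
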